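/- If 𝒯'₀ is a generating set for an E-closed set 𝒯₀ and every theory T ∈ 𝒯'₀ is isolated by some sentence φ ∈ T with (𝒯'₀)_φ = {T}, then 𝒯'₀ is the least generating set: it is contained in every generating set for 𝒯₀. -/
import Mathlib


open Set

variable {σ : Type*}

/-- For a family 𝒯 of theories (sets of sentences) and a sentence φ,
`Tphi 𝒯 φ` is the set 𝒯_φ = {T ∈ 𝒯 | φ ∈ T}. -/
def Tphi (𝒯 : Set (Set σ)) (φ : σ) : Set (Set σ) := {T ∈ 𝒯 | φ ∈ T}

/-- E-closure relative to the ambient set `S` of all complete theories: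
`ClE S 𝒯 = 𝒯 ∪ {T ∈ S | ∀ φ ∈ T, 𝒯_φ is infinite}`. -/
def ClE (S 𝒯 : Set (Set σ)) : Set (Set σ) :=
  𝒯 ∪ {T ∈ S | ∀ φ ∈ T, (Tphi 𝒯 φ).Infinite}

/-- 𝒯 is E-closed if it equals its own E-closure. -/
def EClosed (S 𝒯 : Set (Set σ)) : Prop := ClE S 𝒯 = 𝒯

/-- `𝒯'` is a generating set for `𝒯`. -/
def Generates (S 𝒯' 𝒯 : Set (Set σ)) : Prop := 𝒯' ⊆ 𝒯 ∧ ClE S 𝒯' = 𝒯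

/-- `𝒯'` is the least generating set for `𝒯`. -/
def IsLeastGen (S 𝒯' 𝒯 : Set (Set σ)) : Prop :=
  Generates S 𝒯' 𝒯 ∧ ∀ 𝒯'', Generates S 𝒯'' 𝒯 → 𝒯' ⊆ 𝒯''

/-- `T` is an isolated point of `𝒯`: some sentence φ ∈ T has 𝒯_φ = {T}. -/
def IsolatedIn (𝒯 : Set (Set σ)) (T : Set σ) : Prop := ∃ φ ∈ T, Tphi 𝒯 φ = {T}

/-- The meet operation ∧′: E-closure of the set of isolated points of 𝒯₁ ∩ 𝒯₂. -/
def meetI (S 𝒯₁ 𝒯₂ : Set (Set σ)) : Set (Set σ) :=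
  ClE S {T ∈ 𝒯₁ ∩ 𝒯₂ | IsolatedIn (𝒯₁ ∩ 𝒯₂) T}

/-- Theorem 1.3, (3) ⇒ (1): if every theory of a generating set 𝒯'₀ is isolated by some
(𝒯'₀)_φ then 𝒯'₀ is contained in every generating set for 𝒯₀. -/
theorem isolated_gen_least {σ : Type*} (S 𝒯'₀ 𝒯₀ : Set (Set σ))
    (hS : ∀ T ∈ S, T.Nonempty) (h𝒯 : 𝒯₀ ⊆ S)
    (hcl : EClosed S 𝒯₀) (hgen : Generates S 𝒯'₀ 𝒯₀)
    (hiso : ∀ T ∈ 𝒯'₀, IsolatedIn 𝒯'₀ T) :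
    ∀ 𝒯'', Generates S 𝒯'' 𝒯₀ → 𝒯'₀ ⊆ 𝒯'' := by
  intro 𝒯'' hgen'' T hT
  obtain ⟨φ, hφT, hsing⟩ := hiso T hT
  have hT0 : T ∈ 𝒯₀ := hgen.1 hT
  have : T ∈ ClE S 𝒯'' := hgen''.2 ▸ hT0
  rcases this with h | ⟨_, hinf⟩
  · exact h
  · exfalso
    have hinfφ : (Tphi 𝒯'' φ).Infinite := hinf φ hφT
    -- pick T' ∈ Tphi 𝒯'' φ with T' ≠ T
    obtain ⟨T', hT', hne⟩ : ∃ T' ∈ Tphi 𝒯'' φ, T' ≠ T := by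
      by_contra hcon
      push_neg at hcon
      exact hinfφ ((Set.finite_singleton T).subset (fun x hx => hcon x hx))
    obtain ⟨hT'mem, hφT'⟩ := hT'
    have hT'0 : T' ∈ 𝒯₀ := hgen''.1 hT'mem
    have : T' ∈ ClE S 𝒯'₀ := hgen.2 ▸ hT'0
    rcases this with h' | ⟨_, hinf'⟩
    · have : T' ∈ Tphi 𝒯'₀ φ := ⟨h', hφT'⟩
      rw [hsing] at this
      exact hne this
    · have := hinf' φ hφT'
      rw [hsing] at this
      exact this (Set.finite_singleton T)
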